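/- arXiv:2109.12716 — 2 statements merged into one kernel-verified Lean document; each statement's English description precedes it below -/
import Mathlib

section
/- Let M_G = max over matchings m of H(m) be the ground state energy of the matching model on a finite graph G with vertex partition A ∪ B and bridging edges E_k. Let M_A, M_B be the ground state energies on the induced subgraphs. Then 0 ≤ M_G − M_A − M_B ≤ Σ_{e=(u,v) ∈ E_k} max(ω_e − ν_u − ν_v, 0). -/
open Finset
open scoped Classical

variable {V : Type*}

/-- `m` is a matching of `G` using only vertices in `S`: a set of edges of `G`,
all of whose endpoints lie in `S`, that are pairwise vertex-disjoint. -/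
def IsMatchingOn (G : SimpleGraph V) (S : Finset V) (m : Finset (Sym2 V)) : Prop :=
  (∀ e ∈ m, e ∈ G.edgeSet ∧ ∀ v ∈ e, v ∈ S) ∧
  ∀ e ∈ m, ∀ f ∈ m, e ≠ f → ∀ v ∈ e, v ∉ f

/-- The Hamiltonian `H(m) = Σ_{v ∈ S uncovered} ν v + Σ_{e ∈ m} ω e`. -/
noncomputable def Ham (ν : V → ℝ) (ω : Sym2 V → ℝ) (S : Finset V)
    (m : Finset (Sym2 V)) : ℝ :=
  (∑ v ∈ S.filter (fun v => ∀ e ∈ m, v ∉ e), ν v) + ∑ e ∈ m, ω e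

/-- The matching partition function on the induced subgraph on `S`. -/
noncomputable def Zfun [Fintype V] [DecidableEq V] (G : SimpleGraph V) (ν : V → ℝ)
    (ω : Sym2 V → ℝ) (S : Finset V) : ℝ :=
  ∑ m ∈ Finset.univ.filter (fun m : Finset (Sym2 V) => IsMatchingOn G S m),
    Real.exp (Ham ν ω S m)

/-- The ground state energy: the maximal value of the Hamiltonian over all matchings
on the induced subgraph on `S`. -/
noncomputable def GSE (G : SimpleGraph V) (ν : V → ℝ) (ω : Sym2 V → ℝ)
    (S : Finset V) : ℝ :=
  sSup {x : ℝ | ∃ m, IsMatchingOn G S m ∧ x = Ham ν ω S m}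

noncomputable def nusum (ν : V → ℝ) : Sym2 V → ℝ :=
  Sym2.lift ⟨fun u v => ν u + ν v, fun _ _ => add_comm _ _⟩

lemma nusum_mk (ν : V → ℝ) (a b : V) : nusum ν s(a, b) = ν a + ν b := rfl

lemma matchingOn_empty (G : SimpleGraph V) (S : Finset V) : IsMatchingOn G S ∅ := by
  constructor <;> intro e he <;> simp at he

section
variable [Fintype V] [DecidableEq V]

lemma ham_eq (ν : V → ℝ) (ω : Sym2 V → ℝ) (S : Finset V) (m : Finset (Sym2 V)) :
    Ham ν ω S m = (∑ v ∈ S, if (∀ e ∈ m, v ∉ e) then ν v else 0) + ∑ e ∈ m, ω e := by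
  unfold Ham
  rw [Finset.sum_filter]
  refine congrArg (· + ∑ e ∈ m, ω e) (Finset.sum_congr rfl fun v _ => ?_)
  congr

lemma gse_finite (G : SimpleGraph V) (ν : V → ℝ) (ω : Sym2 V → ℝ) (S : Finset V) :
    {x : ℝ | ∃ m, IsMatchingOn G S m ∧ x = Ham ν ω S m}.Finite :=
  Set.Finite.subset (Set.finite_range fun m : Finset (Sym2 V) => Ham ν ω S m)
    (by rintro x ⟨m, _, rfl⟩; exact ⟨m, rfl⟩)

lemma ham_le_gse {G : SimpleGraph V} {ν : V → ℝ} {ω : Sym2 V → ℝ} {S : Finset V}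
    {m : Finset (Sym2 V)} (h : IsMatchingOn G S m) : Ham ν ω S m ≤ GSE G ν ω S :=
  le_csSup (gse_finite G ν ω S).bddAbove ⟨m, h, rfl⟩

lemma gse_exists (G : SimpleGraph V) (ν : V → ℝ) (ω : Sym2 V → ℝ) (S : Finset V) :
    ∃ m, IsMatchingOn G S m ∧ GSE G ν ω S = Ham ν ω S m := by
  have hne : {x : ℝ | ∃ m, IsMatchingOn G S m ∧ x = Ham ν ω S m}.Nonempty :=
    ⟨Ham ν ω S ∅, ∅, matchingOn_empty G S, rfl⟩
  exact hne.csSup_mem (gse_finite G ν ω S)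

lemma sum_split {A B : Finset V} (hdisj : Disjoint A B) (hcover : A ∪ B = Finset.univ)
    (f : V → ℝ) : ∑ v ∈ Finset.univ, f v = ∑ v ∈ A, f v + ∑ v ∈ B, f v := by
  rw [← hcover, Finset.sum_union hdisj]

lemma sum_cov (ν : V → ℝ) (m : Finset (Sym2 V))
    (hne : ∀ e ∈ m, ¬ e.IsDiag)
    (hdis : ∀ e ∈ m, ∀ f ∈ m, e ≠ f → ∀ v ∈ e, v ∉ f) :
    ∑ v ∈ Finset.univ, (if ∃ e ∈ m, v ∈ e then ν v else 0) = ∑ e ∈ m, nusum ν e := by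
  rw [← Finset.sum_filter]
  have hbi : Finset.univ.filter (fun v => ∃ e ∈ m, v ∈ e)
      = m.biUnion (fun e => Finset.univ.filter (fun v => v ∈ e)) := by
    ext v; simp
  rw [hbi, Finset.sum_biUnion]
  · refine Finset.sum_congr rfl fun e he => ?_
    induction e using Sym2.ind with
    | _ a b =>
      have hab : a ≠ b := by simpa using hne _ he
      have : Finset.univ.filter (fun v => v ∈ s(a, b)) = {a, b} := by
        ext v; simp [Sym2.mem_iff]
      rw [this, Finset.sum_pair hab, nusum_mk]
  · intro e he f hf hef
    simp only [Finset.disjoint_left, Finset.mem_filter] at *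
    rintro v ⟨-, hv⟩ ⟨-, hv'⟩
    exact hdis e he f hf hef v hv hv'

end

/-- Cutting bound for the ground state energy: with vertex partition `A ∪ B`,
`0 ≤ M_G − M_A − M_B ≤ Σ_{bridging (u,v)} (ω_{uv} − ν_u − ν_v)₊`. -/
theorem GSE_cut_bound [Fintype V] [DecidableEq V] (G : SimpleGraph V)
    (ν : V → ℝ) (ω : Sym2 V → ℝ) (A B : Finset V)
    (hdisj : Disjoint A B) (hcover : A ∪ B = Finset.univ) :
    (0 ≤ GSE G ν ω Finset.univ - GSE G ν ω A - GSE G ν ω B) ∧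
    (GSE G ν ω Finset.univ - GSE G ν ω A - GSE G ν ω B ≤
      ∑ u ∈ A, ∑ v ∈ B, (if G.Adj u v then
        max (ω s(u, v) - ν u - ν v) 0 else 0)) := by

  constructor
  · -- lower bound
    obtain ⟨ma, hma, hGA⟩ := gse_exists G ν ω A
    obtain ⟨mb, hmb, hGB⟩ := gse_exists G ν ω B
    have hdab : Disjoint ma mb := by
      rw [Finset.disjoint_left]
      intro e hea heb
      have hv : e.out.1 ∈ e := Sym2.out_fst_mem e
      exact Finset.disjoint_left.mp hdisj ((hma.1 e hea).2 _ hv) ((hmb.1 e heb).2 _ hv)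
    have hmatch : IsMatchingOn G Finset.univ (ma ∪ mb) := by
      constructor
      · intro e he
        rcases Finset.mem_union.mp he with h | h
        · exact ⟨(hma.1 e h).1, fun v _ => Finset.mem_univ v⟩
        · exact ⟨(hmb.1 e h).1, fun v _ => Finset.mem_univ v⟩
      · intro e he f hf hef v hv hv'
        rcases Finset.mem_union.mp he with h | h <;> rcases Finset.mem_union.mp hf with h' | h'
        · exact hma.2 e h f h' hef v hv hv'
        · exact Finset.disjoint_left.mp hdisj ((hma.1 e h).2 v hv) ((hmb.1 f h').2 v hv')
        · exact Finset.disjoint_left.mp hdisj ((hma.1 f h').2 v hv') ((hmb.1 e h).2 v hv)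
        · exact hmb.2 e h f h' hef v hv hv'
    have hham : Ham ν ω Finset.univ (ma ∪ mb) = Ham ν ω A ma + Ham ν ω B mb := by
      rw [ham_eq, ham_eq, ham_eq, Finset.sum_union hdab,
        sum_split hdisj hcover (fun v => if (∀ e ∈ ma ∪ mb, v ∉ e) then ν v else 0)]
      have hA : ∑ v ∈ A, (if (∀ e ∈ ma ∪ mb, v ∉ e) then ν v else 0)
          = ∑ v ∈ A, (if (∀ e ∈ ma, v ∉ e) then ν v else 0) := by
        refine Finset.sum_congr rfl fun v hv => if_congr ⟨fun h e he => h e ?_, fun h e he => ?_⟩ rfl rfl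
        · exact Finset.mem_union.mpr (Or.inl he)
        · rcases Finset.mem_union.mp he with he | he
          · exact h e he
          · exact fun hve => Finset.disjoint_left.mp hdisj hv ((hmb.1 e he).2 v hve)
      have hB : ∑ v ∈ B, (if (∀ e ∈ ma ∪ mb, v ∉ e) then ν v else 0)
          = ∑ v ∈ B, (if (∀ e ∈ mb, v ∉ e) then ν v else 0) := by
        refine Finset.sum_congr rfl fun v hv => if_congr ⟨fun h e he => h e ?_, fun h e he => ?_⟩ rfl rfl
        · exact Finset.mem_union.mpr (Or.inr he)
        · rcases Finset.mem_union.mp he with he | he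
          · exact fun hve => Finset.disjoint_left.mp hdisj ((hma.1 e he).2 v hve) hv
          · exact h e he
      rw [hA, hB]; ring
    have := ham_le_gse (ν := ν) (ω := ω) hmatch
    rw [hham, ← hGA, ← hGB] at this
    linarith
  · -- upper bound
    obtain ⟨m, hm, hGm⟩ := gse_exists G ν ω Finset.univ
    set mA := m.filter (fun e => ∀ v ∈ e, v ∈ A) with hmA_def
    set mB := m.filter (fun e => ∀ v ∈ e, v ∈ B) with hmB_def
    set mK := m \ (mA ∪ mB) with hmK_def
    have hmAsub : mA ⊆ m := Finset.filter_subset _ _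
    have hmBsub : mB ⊆ m := Finset.filter_subset _ _
    have hmKsub : mK ⊆ m := Finset.sdiff_subset
    have hmatchA : IsMatchingOn G A mA := by
      refine ⟨fun e he => ?_, fun e he f hf => hm.2 e (hmAsub he) f (hmAsub hf)⟩
      have := Finset.mem_filter.mp he
      exact ⟨(hm.1 e this.1).1, this.2⟩
    have hmatchB : IsMatchingOn G B mB := by
      refine ⟨fun e he => ?_, fun e he f hf => hm.2 e (hmBsub he) f (hmBsub hf)⟩
      have := Finset.mem_filter.mp he
      exact ⟨(hm.1 e this.1).1, this.2⟩
    have hbridge : ∀ e ∈ mK, ∃ a ∈ A, ∃ b ∈ B, e = s(a, b) := by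
      intro e he
      have hem : e ∈ m := hmKsub he
      have hnotA : ¬(∀ v ∈ e, v ∈ A) := by
        intro h
        exact (Finset.mem_sdiff.mp he).2
          (Finset.mem_union.mpr (Or.inl (Finset.mem_filter.mpr ⟨hem, h⟩)))
      have hnotB : ¬(∀ v ∈ e, v ∈ B) := by
        intro h
        exact (Finset.mem_sdiff.mp he).2
          (Finset.mem_union.mpr (Or.inr (Finset.mem_filter.mpr ⟨hem, h⟩)))
      have hall : ∀ v : V, v ∈ A ∨ v ∈ B := fun v =>
        Finset.mem_union.mp (hcover ▸ Finset.mem_univ v)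
      clear he hem
      induction e using Sym2.ind with
      | _ a b =>
        rcases hall a with ha | ha <;> rcases hall b with hb | hb
        · exact absurd (fun v hv => by
            rcases Sym2.mem_iff.mp hv with rfl | rfl <;> assumption) hnotA
        · exact ⟨a, ha, b, hb, rfl⟩
        · exact ⟨b, hb, a, ha, Sym2.eq_swap.symm⟩
        · exact absurd (fun v hv => by
            rcases Sym2.mem_iff.mp hv with rfl | rfl <;> assumption) hnotB
    have hdAB : Disjoint mA mB := by
      rw [Finset.disjoint_left]
      intro e hea heb
      have hv : e.out.1 ∈ e := Sym2.out_fst_mem e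
      exact Finset.disjoint_left.mp hdisj
        ((Finset.mem_filter.mp hea).2 _ hv) ((Finset.mem_filter.mp heb).2 _ hv)
    have homega : ∑ e ∈ m, ω e = ∑ e ∈ mA, ω e + ∑ e ∈ mB, ω e + ∑ e ∈ mK, ω e := by
      have hsub : mA ∪ mB ⊆ m := Finset.union_subset hmAsub hmBsub
      rw [← Finset.sum_sdiff hsub, ← hmK_def, Finset.sum_union hdAB]; ring
    -- pointwise identity on A
    have hApt : ∑ v ∈ A, (if (∀ e ∈ mA, v ∉ e) then ν v else 0)
        = ∑ v ∈ A, ((if (∀ e ∈ m, v ∉ e) then ν v else 0)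
            + (if (∃ e ∈ mK, v ∈ e) then ν v else 0)) := by
      refine Finset.sum_congr rfl fun v hv => ?_
      by_cases h1 : ∀ e ∈ m, v ∉ e
      · have huA : ∀ e ∈ mA, v ∉ e := fun e he => h1 e (hmAsub he)
        have hnk : ¬ ∃ e ∈ mK, v ∈ e := by
          rintro ⟨e, he, hve⟩; exact h1 e (hmKsub he) hve
        rw [if_pos huA, if_pos h1, if_neg hnk]; ring
      · rw [if_neg h1]
        push_neg at h1
        obtain ⟨e, hem, hve⟩ := h1
        have henB : e ∉ mB := by
          intro he
          exact Finset.disjoint_left.mp hdisj hv ((Finset.mem_filter.mp he).2 v hve)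
        by_cases heA : e ∈ mA
        · have hnuA : ¬ ∀ f ∈ mA, v ∉ f := fun h => h e heA hve
          have hnk : ¬ ∃ f ∈ mK, v ∈ f := by
            rintro ⟨f, hf, hvf⟩
            have hef : e ≠ f := by
              rintro rfl
              exact (Finset.mem_sdiff.mp hf).2 (Finset.mem_union.mpr (Or.inl heA))
            exact hm.2 e hem f (hmKsub hf) hef v hve hvf
          rw [if_neg hnuA, if_neg hnk]; ring
        · have heK : e ∈ mK := by
            rw [hmK_def, Finset.mem_sdiff, Finset.mem_union]
            exact ⟨hem, fun h => h.elim heA henB⟩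
          have huA : ∀ f ∈ mA, v ∉ f := by
            intro f hf hvf
            have hef : e ≠ f := fun h => heA (h ▸ hf)
            exact hm.2 e hem f (hmAsub hf) hef v hve hvf
          have hk : ∃ f ∈ mK, v ∈ f := ⟨e, heK, hve⟩
          rw [if_pos huA, if_pos hk]; ring
    have hBpt : ∑ v ∈ B, (if (∀ e ∈ mB, v ∉ e) then ν v else 0)
        = ∑ v ∈ B, ((if (∀ e ∈ m, v ∉ e) then ν v else 0)
            + (if (∃ e ∈ mK, v ∈ e) then ν v else 0)) := by
      refine Finset.sum_congr rfl fun v hv => ?_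
      by_cases h1 : ∀ e ∈ m, v ∉ e
      · have huB : ∀ e ∈ mB, v ∉ e := fun e he => h1 e (hmBsub he)
        have hnk : ¬ ∃ e ∈ mK, v ∈ e := by
          rintro ⟨e, he, hve⟩; exact h1 e (hmKsub he) hve
        rw [if_pos huB, if_pos h1, if_neg hnk]; ring
      · rw [if_neg h1]
        push_neg at h1
        obtain ⟨e, hem, hve⟩ := h1
        have henA : e ∉ mA := by
          intro he
          exact Finset.disjoint_left.mp hdisj ((Finset.mem_filter.mp he).2 v hve) hv
        by_cases heB : e ∈ mB
        · have hnuB : ¬ ∀ f ∈ mB, v ∉ f := fun h => h e heB hve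
          have hnk : ¬ ∃ f ∈ mK, v ∈ f := by
            rintro ⟨f, hf, hvf⟩
            have hef : e ≠ f := by
              rintro rfl
              exact (Finset.mem_sdiff.mp hf).2 (Finset.mem_union.mpr (Or.inr heB))
            exact hm.2 e hem f (hmKsub hf) hef v hve hvf
          rw [if_neg hnuB, if_neg hnk]; ring
        · have heK : e ∈ mK := by
            rw [hmK_def, Finset.mem_sdiff, Finset.mem_union]
            exact ⟨hem, fun h => h.elim henA heB⟩
          have huB : ∀ f ∈ mB, v ∉ f := by
            intro f hf hvf
            have hef : e ≠ f := fun h => heB (h ▸ hf)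
            exact hm.2 e hem f (hmBsub hf) hef v hve hvf
          have hk : ∃ f ∈ mK, v ∈ f := ⟨e, heK, hve⟩
          rw [if_pos huB, if_pos hk]; ring
    have hcovK : ∑ v ∈ A, (if (∃ e ∈ mK, v ∈ e) then ν v else 0)
        + ∑ v ∈ B, (if (∃ e ∈ mK, v ∈ e) then ν v else 0) = ∑ e ∈ mK, nusum ν e := by
      rw [← sum_split hdisj hcover (fun v => if (∃ e ∈ mK, v ∈ e) then ν v else 0)]
      exact sum_cov ν mK
        (fun e he => (SimpleGraph.not_isDiag_of_mem_edgeSet G (hm.1 e (hmKsub he)).1))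
        (fun e he f hf => hm.2 e (hmKsub he) f (hmKsub hf))
    have hdec : Ham ν ω Finset.univ m
        = Ham ν ω A mA + Ham ν ω B mB + ∑ e ∈ mK, (ω e - nusum ν e) := by
      rw [ham_eq, ham_eq, ham_eq, homega, hApt, hBpt,
        sum_split hdisj hcover (fun v => if (∀ e ∈ m, v ∉ e) then ν v else 0),
        Finset.sum_add_distrib, Finset.sum_add_distrib, Finset.sum_sub_distrib]
      linarith [hcovK]
    have hbound : ∑ e ∈ mK, (ω e - nusum ν e) ≤
        ∑ u ∈ A, ∑ v ∈ B, (if G.Adj u v then max (ω s(u, v) - ν u - ν v) 0 else 0) := by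
      have step1 : ∑ e ∈ mK, (ω e - nusum ν e) ≤ ∑ e ∈ mK, max (ω e - nusum ν e) 0 :=
        Finset.sum_le_sum fun e _ => le_max_left _ _
      have step2 : ∑ p ∈ (A ×ˢ B).filter (fun p => s(p.1, p.2) ∈ mK),
              (if G.Adj p.1 p.2 then max (ω s(p.1, p.2) - ν p.1 - ν p.2) 0 else 0)
          = ∑ e ∈ mK, max (ω e - nusum ν e) 0 := by
        refine Finset.sum_bij (fun p _ => s(p.1, p.2)) ?_ ?_ ?_ ?_
        · intro p hp
          exact (Finset.mem_filter.mp hp).2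
        · intro p hp q hq hpq
          obtain ⟨hpAB, -⟩ := Finset.mem_filter.mp hp
          obtain ⟨hqAB, -⟩ := Finset.mem_filter.mp hq
          obtain ⟨hp1, hp2⟩ := Finset.mem_product.mp hpAB
          obtain ⟨hq1, hq2⟩ := Finset.mem_product.mp hqAB
          rw [Sym2.eq_iff] at hpq
          rcases hpq with ⟨h1, h2⟩ | ⟨h1, h2⟩
          · exact Prod.ext h1 h2
          · exact absurd hq2 (fun h => Finset.disjoint_left.mp hdisj hp1 (h1 ▸ h))
        · intro e he
          obtain ⟨a, ha, b, hb, rfl⟩ := hbridge e he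
          exact ⟨(a, b), Finset.mem_filter.mpr ⟨Finset.mem_product.mpr ⟨ha, hb⟩, he⟩, rfl⟩
        · intro p hp
          have hK := (Finset.mem_filter.mp hp).2
          have hadj : G.Adj p.1 p.2 := by
            have := (hm.1 _ (hmKsub hK)).1
            rwa [SimpleGraph.mem_edgeSet] at this
          rw [if_pos hadj, nusum_mk, sub_sub]
      have step3 : ∑ p ∈ (A ×ˢ B).filter (fun p => s(p.1, p.2) ∈ mK),
              (if G.Adj p.1 p.2 then max (ω s(p.1, p.2) - ν p.1 - ν p.2) 0 else 0)
          ≤ ∑ p ∈ A ×ˢ B,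
              (if G.Adj p.1 p.2 then max (ω s(p.1, p.2) - ν p.1 - ν p.2) 0 else 0) := by
        apply Finset.sum_le_sum_of_subset_of_nonneg (Finset.filter_subset _ _)
        intro p _ _
        split
        · exact le_max_right _ _
        · exact le_refl 0
      rw [← Finset.sum_product']
      calc ∑ e ∈ mK, (ω e - nusum ν e) ≤ ∑ e ∈ mK, max (ω e - nusum ν e) 0 := step1
        _ = _ := step2.symm
        _ ≤ _ := step3
    have h1 : Ham ν ω A mA ≤ GSE G ν ω A := ham_le_gse hmatchA
    have h2 : Ham ν ω B mB ≤ GSE G ν ω B := ham_le_gse hmatchB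
    rw [hGm, hdec]
    linarith
end

section
/- Let A_n be the n×n tridiagonal complex matrix with diagonal entries i·e^{ν_k} (k = 1,…,n) and off-diagonal entries (A_n)_{k,k+1} = (A_n)_{k+1,k} = e^{ω_k/2}. Then |det A_n| = Z_n, where Z_n = Σ_{m matching of the path graph on n vertices} exp(Σ_{k ∉ m} ν_k + Σ_{(k,k+1) ∈ m} ω_k). -/
open Finset
open scoped Classical

variable {V : Type*}

lemma Ham_insert_eq (ν : V → ℝ) (ω : Sym2 V → ℝ) {S S' : Finset V} {b : V}
    (m : Finset (Sym2 V)) (hbS : b ∉ S') (hS : ∀ v, v ∈ S ↔ v = b ∨ v ∈ S')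
    (hbm : ∀ e ∈ m, b ∉ e) :
    Ham ν ω S m = ν b + Ham ν ω S' m := by
  have hS' : S = insert b S' := by
    ext v
    rw [hS v, Finset.mem_insert]
  rw [Ham, Ham, hS', Finset.filter_insert, if_pos hbm,
    Finset.sum_insert (fun hc => hbS (Finset.mem_of_mem_filter _ hc))]
  ring

lemma Ham_erase_eq (ν : V → ℝ) (ω : Sym2 V → ℝ) {S S' : Finset V} {e₀ : Sym2 V}
    {m m' : Finset (Sym2 V)} (he : e₀ ∈ m)
    (hm' : ∀ e, e ∈ m' ↔ e ≠ e₀ ∧ e ∈ m)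
    (hS : ∀ v, (v ∈ S ∧ ∀ e ∈ m, v ∉ e) ↔ (v ∈ S' ∧ ∀ e ∈ m', v ∉ e)) :
    Ham ν ω S m = ω e₀ + Ham ν ω S' m' := by
  have hm'' : m' = m.erase e₀ := by
    ext e
    rw [hm' e, Finset.mem_erase]
  subst hm''
  rw [Ham, Ham, ← Finset.add_sum_erase m ω he]
  have hst : S.filter (fun v => ∀ e ∈ m, v ∉ e)
      = S'.filter (fun v => ∀ e ∈ m.erase e₀, v ∉ e) := by
    ext v
    simp only [Finset.mem_filter]
    have := hS v
    rw [show (∀ e ∈ m.erase e₀, v ∉ e) ↔ (∀ e ∈ m.erase e₀, v ∉ e) from Iff.rfl] at this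
    exact this
  rw [hst]
  ring

section path
open SimpleGraph
variable {n : ℕ}

noncomputable def Wk (ν : Fin n → ℝ) (ω : Sym2 (Fin n) → ℝ) (k : ℕ) : ℝ :=
  Zfun (pathGraph n) ν ω (Finset.univ.filter (fun v : Fin n => (v : ℕ) < k))

lemma edge_mem_cases {e : Sym2 (Fin n)} (he : e ∈ (pathGraph n).edgeSet) {v : Fin n}
    (hv : v ∈ e) : ∃ u, e = s(v, u) ∧ ((v : ℕ) + 1 = u ∨ (u : ℕ) + 1 = v) := by
  induction e with
  | _ x y =>
    rw [SimpleGraph.mem_edgeSet] at he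
    rcases Sym2.mem_iff.mp hv with rfl | rfl
    · exact ⟨y, rfl, pathGraph_adj.mp he⟩
    · exact ⟨x, Sym2.eq_swap, (pathGraph_adj.mp he).symm⟩

lemma Wk_zero (ν : Fin n → ℝ) (ω : Sym2 (Fin n) → ℝ) : Wk ν ω 0 = 1 := by
  rw [Wk, Zfun]
  have h1 : (Finset.univ.filter (fun m : Finset (Sym2 (Fin n)) =>
      IsMatchingOn (pathGraph n) (Finset.univ.filter (fun v : Fin n => (v : ℕ) < 0)) m))
      = {∅} := by
    ext m
    simp only [mem_filter, mem_univ, true_and, mem_singleton]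
    constructor
    · rintro ⟨h1, -⟩
      by_contra hm
      obtain ⟨e, he⟩ := Finset.nonempty_iff_ne_empty.mpr hm
      induction e with
      | _ x y =>
        have := (h1 _ he).2 x (Sym2.mem_mk_left x y)
        simp at this
    · rintro rfl
      exact ⟨fun e he => absurd he (by simp), fun e he => absurd he (by simp)⟩
  rw [h1, Finset.sum_singleton]
  have : Ham ν ω (Finset.univ.filter (fun v : Fin n => (v : ℕ) < 0)) ∅ = 0 := by
    rw [Ham]
    simp
  rw [this, Real.exp_zero]

lemma Wk_one (ν : Fin n → ℝ) (ω : Sym2 (Fin n) → ℝ) (h : 1 ≤ n) :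
    Wk ν ω 1 = Real.exp (ν ⟨0, h⟩) := by
  rw [Wk, Zfun]
  have h1 : (Finset.univ.filter (fun m : Finset (Sym2 (Fin n)) =>
      IsMatchingOn (pathGraph n) (Finset.univ.filter (fun v : Fin n => (v : ℕ) < 1)) m))
      = {∅} := by
    ext m
    simp only [mem_filter, mem_univ, true_and, mem_singleton]
    constructor
    · rintro ⟨h1, -⟩
      by_contra hm
      obtain ⟨e, he⟩ := Finset.nonempty_iff_ne_empty.mpr hm
      induction e with
      | _ x y =>
        have hx := (h1 _ he).2 x (Sym2.mem_mk_left x y)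
        have hy := (h1 _ he).2 y (Sym2.mem_mk_right x y)
        have hadj := pathGraph_adj.mp ((SimpleGraph.mem_edgeSet _).mp (h1 _ he).1)
        simp only [mem_filter, mem_univ, true_and, Nat.lt_one_iff] at hx hy
        omega
    · rintro rfl
      exact ⟨fun e he => absurd he (by simp), fun e he => absurd he (by simp)⟩
  rw [h1, Finset.sum_singleton]
  congr 1
  rw [Ham, Finset.sum_empty, add_zero]
  refine (Finset.sum_congr ?_ fun _ _ => rfl).trans (Finset.sum_singleton ν (⟨0, h⟩ : Fin n))
  ext v; simp [Fin.ext_iff, Nat.lt_one_iff]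

lemma Wk_succ_succ (ν : Fin n → ℝ) (ω : Sym2 (Fin n) → ℝ) (k : ℕ) (h : k + 2 ≤ n) :
    Wk ν ω (k + 2) =
      Real.exp (ν ⟨k + 1, by omega⟩) * Wk ν ω (k + 1)
        + Real.exp (ω s(⟨k, by omega⟩, ⟨k + 1, by omega⟩)) * Wk ν ω k := by
  set a : Fin n := ⟨k, by omega⟩ with ha
  set b : Fin n := ⟨k + 1, by omega⟩ with hb
  set e₀ : Sym2 (Fin n) := s(a, b) with he₀
  set S2 := Finset.univ.filter (fun v : Fin n => (v : ℕ) < k + 2) with hS2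
  set S1 := Finset.univ.filter (fun v : Fin n => (v : ℕ) < k + 1) with hS1
  set S0 := Finset.univ.filter (fun v : Fin n => (v : ℕ) < k) with hS0
  have memS2 : ∀ v : Fin n, v ∈ S2 ↔ (v : ℕ) < k + 2 := by intro v; simp [hS2]
  have memS1 : ∀ v : Fin n, v ∈ S1 ↔ (v : ℕ) < k + 1 := by intro v; simp [hS1]
  have memS0 : ∀ v : Fin n, v ∈ S0 ↔ (v : ℕ) < k := by intro v; simp [hS0]
  have meme₀ : ∀ v : Fin n, v ∈ e₀ ↔ v = a ∨ v = b := by intro v; rw [he₀, Sym2.mem_iff]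
  -- claim for part 1
  have key1 : ∀ m : Finset (Sym2 (Fin n)),
      (IsMatchingOn (SimpleGraph.pathGraph n) S2 m ∧ e₀ ∉ m) ↔
        IsMatchingOn (SimpleGraph.pathGraph n) S1 m := by
    intro m
    constructor
    · rintro ⟨⟨h1, h2⟩, h3⟩
      refine ⟨fun e he => ⟨(h1 e he).1, fun v hv => ?_⟩, h2⟩
      rw [memS1]
      have hv2 := (h1 e he).2 v hv
      rw [memS2] at hv2
      by_contra hc
      have hvb : v = b := Fin.ext (by simp only [hb]; omega)
      subst hvb
      obtain ⟨u, hu, hadj⟩ := edge_mem_cases (h1 e he).1 hv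
      have hu2 := (h1 e he).2 u (by rw [hu]; exact Sym2.mem_mk_right _ _)
      rw [memS2] at hu2
      have hbval : ((b : Fin n) : ℕ) = k + 1 := rfl
      rcases hadj with h4 | h4
      · omega
      · have hua : u = a := Fin.ext (by simp only [ha]; omega)
        subst hua
        apply h3
        rw [hu, Sym2.eq_swap] at he
        exact he
    · intro hm
      refine ⟨⟨fun e he => ⟨(hm.1 e he).1, fun v hv => ?_⟩, hm.2⟩, fun h3 => ?_⟩
      · have := (hm.1 e he).2 v hv
        rw [memS1] at this
        rw [memS2]
        omega
      · have := (hm.1 e₀ h3).2 b (by rw [meme₀]; right; rfl)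
        rw [memS1] at this
        simp [hb] at this
  -- Ham identity for part 1
  have ham1 : ∀ m : Finset (Sym2 (Fin n)), IsMatchingOn (SimpleGraph.pathGraph n) S1 m →
      Ham ν ω S2 m = ν b + Ham ν ω S1 m := by
    intro m hm
    have hbunc : ∀ e ∈ m, b ∉ e := by
      intro e he hv
      have := (hm.1 e he).2 b hv
      rw [memS1] at this
      simp [hb] at this
    refine Ham_insert_eq ν ω m ?_ ?_ hbunc
    · intro hc
      rw [memS1] at hc
      simp [hb] at hc
    · intro v
      rw [memS2, memS1]
      constructor
      · intro hv
        by_cases hvb : v = b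
        · exact Or.inl hvb
        · right
          have hne : (v : ℕ) ≠ k + 1 := fun hc => hvb (Fin.ext hc)
          omega
      · rintro (rfl | hv)
        · simp [hb]
        · omega
  -- claims for part 2
  have key2a : ∀ m : Finset (Sym2 (Fin n)),
      IsMatchingOn (SimpleGraph.pathGraph n) S2 m → e₀ ∈ m →
        IsMatchingOn (SimpleGraph.pathGraph n) S0 (m.erase e₀) := by
    intro m hm he
    constructor
    · intro f hf
      have hfm := Finset.mem_of_mem_erase hf
      have hfne := Finset.ne_of_mem_erase hf
      refine ⟨(hm.1 f hfm).1, fun v hv => ?_⟩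
      have hv2 := (hm.1 f hfm).2 v hv
      rw [memS2] at hv2
      rw [memS0]
      have hve₀ : v ∉ e₀ := hm.2 f hfm e₀ he hfne v hv
      rw [meme₀] at hve₀
      push_neg at hve₀
      have h1 : (v : ℕ) ≠ k := fun hc => hve₀.1 (Fin.ext hc)
      have h2 : (v : ℕ) ≠ k + 1 := fun hc => hve₀.2 (Fin.ext hc)
      omega
    · intro e he' f hf' hef
      exact hm.2 e (Finset.mem_of_mem_erase he') f (Finset.mem_of_mem_erase hf') hef
  have key2b : ∀ m' : Finset (Sym2 (Fin n)),
      IsMatchingOn (SimpleGraph.pathGraph n) S0 m' →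
        IsMatchingOn (SimpleGraph.pathGraph n) S2 (insert e₀ m') ∧ e₀ ∉ m' := by
    intro m' hm'
    have hsmall : ∀ f ∈ m', ∀ v ∈ f, (v : ℕ) < k := by
      intro f hf v hv
      have := (hm'.1 f hf).2 v hv
      rwa [memS0] at this
    have he₀f : ∀ f ∈ m', ∀ v ∈ e₀, v ∉ f := by
      intro f hf v hv hvf
      rw [meme₀] at hv
      have := hsmall f hf v hvf
      rcases hv with rfl | rfl
      · simp [ha] at this
      · simp [hb] at this
    have he₀notin : e₀ ∉ m' := by
      intro hc
      exact he₀f e₀ hc a (by rw [meme₀]; left; rfl) (by rw [meme₀]; left; rfl)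
    refine ⟨⟨?_, ?_⟩, he₀notin⟩
    · intro e he
      rcases Finset.mem_insert.mp he with rfl | he'
      · refine ⟨?_, ?_⟩
        · rw [SimpleGraph.mem_edgeSet, SimpleGraph.pathGraph_adj]
          left
          simp [ha, hb]
        · intro v hv
          rw [meme₀] at hv
          rw [memS2]
          rcases hv with rfl | rfl
          · simp [ha]
          · simp [hb]
      · refine ⟨(hm'.1 e he').1, fun v hv => ?_⟩
        rw [memS2]
        have := hsmall e he' v hv
        omega
    · intro e he f hf hef v hv
      rcases Finset.mem_insert.mp he with rfl | he' <;>
        rcases Finset.mem_insert.mp hf with rfl | hf'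
      · exact absurd rfl hef
      · exact he₀f f hf' v hv
      · intro hvf
        rw [meme₀] at hvf
        have := hsmall e he' v hv
        rcases hvf with rfl | rfl
        · simp [ha] at this
        · simp [hb] at this
      · exact hm'.2 e he' f hf' hef v hv
  have ham2 : ∀ m : Finset (Sym2 (Fin n)),
      IsMatchingOn (SimpleGraph.pathGraph n) S2 m → e₀ ∈ m →
        Ham ν ω S2 m = ω e₀ + Ham ν ω S0 (m.erase e₀) := by
    intro m hm he
    refine Ham_erase_eq ν ω he (fun e => by rw [Finset.mem_erase]) ?_
    intro v
    constructor
    · rintro ⟨hv, hunc⟩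
      rw [memS2] at hv
      have hve₀ : v ∉ e₀ := hunc e₀ he
      rw [meme₀] at hve₀
      push_neg at hve₀
      have h1 : (v : ℕ) ≠ k := fun hc => hve₀.1 (Fin.ext hc)
      have h2 : (v : ℕ) ≠ k + 1 := fun hc => hve₀.2 (Fin.ext hc)
      exact ⟨(memS0 v).mpr (by omega), fun e he' => hunc e (Finset.mem_of_mem_erase he')⟩
    · rintro ⟨hv, hunc⟩
      rw [memS0] at hv
      refine ⟨(memS2 v).mpr (by omega), fun e he' hve => ?_⟩
      by_cases hee : e = e₀
      · subst hee
        rw [meme₀] at hve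
        rcases hve with rfl | rfl
        · simp [ha] at hv
        · simp [hb] at hv
      · exact hunc e (Finset.mem_erase.mpr ⟨hee, he'⟩) hve
  -- now assemble
  rw [Wk, Zfun]
  rw [← Finset.sum_filter_add_sum_filter_not
    (Finset.univ.filter fun m : Finset (Sym2 (Fin n)) =>
      IsMatchingOn (SimpleGraph.pathGraph n) S2 m) (fun m => e₀ ∈ m)]
  rw [add_comm]
  congr 1
  · -- not containing e₀
    rw [Wk, Zfun, Finset.mul_sum, Finset.filter_filter]
    refine Finset.sum_bij' (fun m _ => m) (fun m _ => m) ?_ ?_ (fun _ _ => rfl)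
      (fun _ _ => rfl) ?_
    · intro m hm
      simp only [mem_filter, mem_univ, true_and] at hm ⊢
      exact (key1 m).mp ⟨hm.1, hm.2⟩
    · intro m hm
      simp only [mem_filter, mem_univ, true_and] at hm ⊢
      exact (key1 m).mpr hm
    · intro m hm
      simp only [mem_filter, mem_univ, true_and] at hm
      rw [ham1 m ((key1 m).mp ⟨hm.1, hm.2⟩), Real.exp_add]
  · -- containing e₀
    rw [Wk, Zfun, Finset.mul_sum, Finset.filter_filter]
    refine Finset.sum_bij' (fun m _ => m.erase e₀) (fun m _ => insert e₀ m) ?_ ?_ ?_ ?_ ?_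
    · intro m hm
      simp only [mem_filter, mem_univ, true_and] at hm ⊢
      exact key2a m hm.1 hm.2
    · intro m hm
      simp only [mem_filter, mem_univ, true_and] at hm ⊢
      exact ⟨(key2b m hm).1, Finset.mem_insert_self _ _⟩
    · intro m hm
      simp only [mem_filter, mem_univ, true_and] at hm
      exact Finset.insert_erase hm.2
    · intro m hm
      simp only [mem_filter, mem_univ, true_and] at hm
      exact Finset.erase_insert (key2b m hm).2
    · intro m hm
      simp only [mem_filter, mem_univ, true_and] at hm
      rw [ham2 m hm.1 hm.2, Real.exp_add]

lemma detB_one (ν : Fin n → ℝ) (ω : Sym2 (Fin n) → ℝ) (A : Matrix (Fin n) (Fin n) ℂ)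
    (hA : A = fun i j =>
      if i = j then Complex.I * (Real.exp (ν i) : ℂ)
      else if (SimpleGraph.pathGraph n).Adj i j then (Real.exp (ω s(i, j) / 2) : ℂ)
      else 0) (h : 1 ≤ n) :
    (A.submatrix (Fin.castLE h) (Fin.castLE h)).det
      = Complex.I * (Real.exp (ν ⟨0, h⟩) : ℂ) := by
  rw [Matrix.det_fin_one, Matrix.submatrix_apply, hA]
  simp only [if_true]
  rfl

lemma detB_step (ν : Fin n → ℝ) (ω : Sym2 (Fin n) → ℝ) (A : Matrix (Fin n) (Fin n) ℂ)
    (hA : A = fun i j =>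
      if i = j then Complex.I * (Real.exp (ν i) : ℂ)
      else if (SimpleGraph.pathGraph n).Adj i j then (Real.exp (ω s(i, j) / 2) : ℂ)
      else 0) (k : ℕ) (h : k + 2 ≤ n) :
    (A.submatrix (Fin.castLE h) (Fin.castLE h)).det =
      Complex.I * (Real.exp (ν ⟨k + 1, by omega⟩) : ℂ) *
        (A.submatrix (Fin.castLE (show k + 1 ≤ n by omega))
          (Fin.castLE (show k + 1 ≤ n by omega))).det
      - (Real.exp (ω s(⟨k, by omega⟩, ⟨k + 1, by omega⟩)) : ℂ) *
        (A.submatrix (Fin.castLE (show k ≤ n by omega))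
          (Fin.castLE (show k ≤ n by omega))).det := by
  have entry : ∀ i j : Fin n, A i j =
      if i = j then Complex.I * (Real.exp (ν i) : ℂ)
      else if (SimpleGraph.pathGraph n).Adj i j then (Real.exp (ω s(i, j) / 2) : ℂ)
      else 0 := fun i j => by rw [hA]
  have h1 : k + 1 ≤ n := by omega
  have h0 : k ≤ n := by omega
  set B2 := A.submatrix (Fin.castLE h) (Fin.castLE h) with hB2
  set c : Fin (k + 2) := ⟨k, by omega⟩ with hc
  set d : Fin (k + 2) := Fin.last (k + 1) with hd
  have hcd : c ≠ d := by
    intro hcon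
    have := congrArg Fin.val hcon
    simp [hc, hd] at this
  rw [Matrix.det_succ_row B2 (Fin.last (k + 1))]
  rw [← Finset.sum_subset (Finset.subset_univ ({c, d} : Finset (Fin (k + 2)))) ?hzero]
  case hzero =>
    intro j _ hj
    simp only [Finset.mem_insert, Finset.mem_singleton] at hj
    push_neg at hj
    have hj1 : (j : ℕ) ≠ k := fun hcon => hj.1 (Fin.ext hcon)
    have hj2 : (j : ℕ) ≠ k + 1 := by
      intro hcon
      exact hj.2 (Fin.ext (by simp [hd, hcon]))
    have hjk : (j : ℕ) < k := by
      have := j.isLt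
      omega
    have hent : B2 (Fin.last (k + 1)) j = 0 := by
      rw [hB2, Matrix.submatrix_apply, entry]
      rw [if_neg, if_neg]
      · rw [SimpleGraph.pathGraph_adj]
        simp only [Fin.coe_castLE, Fin.val_last]
        omega
      · intro hcon
        have := congrArg Fin.val hcon
        simp only [Fin.coe_castLE, Fin.val_last] at this
        omega
    rw [hent]
    ring
  rw [Finset.sum_pair hcd]
  -- evaluate term at c
  have hsignc : ((-1 : ℂ)) ^ ((Fin.last (k + 1) : ℕ) + (c : ℕ)) = -1 := by
    simp only [Fin.val_last, hc]
    exact Odd.neg_one_pow ⟨k, by ring⟩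
  have hentc : B2 (Fin.last (k + 1)) c
      = (Real.exp (ω s(⟨k, by omega⟩, ⟨k + 1, by omega⟩) / 2) : ℂ) := by
    rw [hB2, Matrix.submatrix_apply, entry]
    rw [if_neg, if_pos]
    · have e1 : Fin.castLE h (Fin.last (k + 1)) = (⟨k + 1, by omega⟩ : Fin n) := rfl
      have e2 : Fin.castLE h c = (⟨k, by omega⟩ : Fin n) := rfl
      rw [e1, e2, Sym2.eq_swap]
    · rw [SimpleGraph.pathGraph_adj]
      right
      rfl
    · intro hcon
      have := congrArg Fin.val hcon
      simp only [Fin.coe_castLE, Fin.val_last] at this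
      change k + 1 = k at this
      omega
  -- evaluate term at d
  have hsignd : ((-1 : ℂ)) ^ ((Fin.last (k + 1) : ℕ) + (d : ℕ)) = 1 := by
    simp only [Fin.val_last, hd]
    exact Even.neg_one_pow ⟨k + 1, rfl⟩
  have hentd : B2 (Fin.last (k + 1)) d
      = Complex.I * (Real.exp (ν ⟨k + 1, by omega⟩) : ℂ) := by
    rw [hB2, Matrix.submatrix_apply, entry, if_pos rfl]
    rfl
  -- minor at d
  have hminord : B2.submatrix (Fin.last (k + 1)).succAbove (d.succAbove)
      = A.submatrix (Fin.castLE h1) (Fin.castLE h1) := by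
    rw [hd, Fin.succAbove_last]
    ext i j
    rfl
  -- minor at c
  have hminorc : (B2.submatrix (Fin.last (k + 1)).succAbove (c.succAbove)).det
      = (Real.exp (ω s(⟨k, by omega⟩, ⟨k + 1, by omega⟩) / 2) : ℂ) *
        (A.submatrix (Fin.castLE h0) (Fin.castLE h0)).det := by
    rw [Fin.succAbove_last]
    rw [Matrix.det_succ_column (B2.submatrix Fin.castSucc c.succAbove) (Fin.last k)]
    rw [← Finset.sum_subset (Finset.subset_univ ({Fin.last k} : Finset (Fin (k + 1)))) ?hz2]
    case hz2 =>
      intro i _ hi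
      simp only [Finset.mem_singleton] at hi
      have hik : (i : ℕ) < k := by
        have h3 : (i : ℕ) ≠ k := by
          intro hcon
          exact hi (Fin.ext (by simp [hcon]))
        have := i.isLt
        omega
      have hcol : c.succAbove (Fin.last k) = Fin.last (k + 1) := by
        rw [Fin.succAbove_of_le_castSucc]
        · exact Fin.succ_last k
        · rw [Fin.le_def]
          simp [hc]
      have hent : (B2.submatrix Fin.castSucc c.succAbove) i (Fin.last k) = 0 := by
        rw [Matrix.submatrix_apply, hcol, hB2, Matrix.submatrix_apply, entry]
        rw [if_neg, if_neg]
        · rw [SimpleGraph.pathGraph_adj]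
          simp only [Fin.coe_castLE, Fin.val_last, Fin.coe_castSucc]
          omega
        · intro hcon
          have := congrArg Fin.val hcon
          simp only [Fin.coe_castLE, Fin.val_last, Fin.coe_castSucc] at this
          omega
      rw [hent]
      ring
    rw [Finset.sum_singleton]
    have hcol : c.succAbove (Fin.last k) = Fin.last (k + 1) := by
      rw [Fin.succAbove_of_le_castSucc]
      · exact Fin.succ_last k
      · rw [Fin.le_def]
        simp [hc]
    have hsign : ((-1 : ℂ)) ^ ((Fin.last k : ℕ) + (Fin.last k : ℕ)) = 1 := by
      simp only [Fin.val_last]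
      exact Even.neg_one_pow ⟨k, rfl⟩
    have hent : (B2.submatrix Fin.castSucc c.succAbove) (Fin.last k) (Fin.last k)
        = (Real.exp (ω s(⟨k, by omega⟩, ⟨k + 1, by omega⟩) / 2) : ℂ) := by
      rw [Matrix.submatrix_apply, hcol, hB2, Matrix.submatrix_apply, entry]
      rw [if_neg, if_pos]
      · rfl
      · rw [SimpleGraph.pathGraph_adj]
        left
        rfl
      · intro hcon
        have := congrArg Fin.val hcon
        simp only [Fin.coe_castLE, Fin.val_last, Fin.coe_castSucc] at this
        omega
    have hmm : ((B2.submatrix Fin.castSucc c.succAbove).submatrix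
          (Fin.last k).succAbove (Fin.last k).succAbove)
        = A.submatrix (Fin.castLE h0) (Fin.castLE h0) := by
      rw [Fin.succAbove_last]
      ext i j
      simp only [Matrix.submatrix_apply, hB2]
      have hcc : c.succAbove (Fin.castSucc j) = Fin.castSucc (Fin.castSucc j) := by
        apply Fin.succAbove_of_castSucc_lt
        rw [Fin.lt_def]
        simp only [Fin.coe_castSucc, hc]
        exact j.isLt
      rw [hcc]
      rfl
    rw [hsign, hent, hmm]
    ring
  rw [hsignc, hsignd, hentc, hentd, hminord, hminorc]
  have hexp : (Real.exp (ω s(⟨k, by omega⟩, ⟨k + 1, by omega⟩) / 2) : ℂ) *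
      (Real.exp (ω s(⟨k, by omega⟩, ⟨k + 1, by omega⟩) / 2) : ℂ)
      = (Real.exp (ω s(⟨k, by omega⟩, ⟨k + 1, by omega⟩)) : ℂ) := by
    rw [← Complex.ofReal_mul, ← Real.exp_add, add_halves]
  linear_combination (-(A.submatrix (Fin.castLE h0) (Fin.castLE h0)).det) * hexp

end path

/-- The absolute value of the determinant of the tridiagonal matrix with diagonal
entries `i e^{ν k}` and off-diagonal entries `e^{ω (k,k+1) / 2}` equals the matching
partition function of the path graph on `n` vertices. -/
theorem abs_det_tridiagonal_eq_Zfun (n : ℕ) (ν : Fin n → ℝ) (ω : Sym2 (Fin n) → ℝ)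
    (A : Matrix (Fin n) (Fin n) ℂ)
    (hA : A = fun i j =>
      if i = j then Complex.I * (Real.exp (ν i) : ℂ)
      else if (SimpleGraph.pathGraph n).Adj i j then (Real.exp (ω s(i, j) / 2) : ℂ)
      else 0) :
    ‖A.det‖ = Zfun (SimpleGraph.pathGraph n) ν ω Finset.univ := by
  have key : ∀ k, ∀ hk : k ≤ n,
      (A.submatrix (Fin.castLE hk) (Fin.castLE hk)).det
        = Complex.I ^ k * ((Wk ν ω k : ℝ) : ℂ) := by
    intro k
    induction k using Nat.strong_induction_on with
    | _ k ih =>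
      match k, ih with
      | 0, _ =>
        intro hk
        simp [Matrix.det_fin_zero, Wk_zero]
      | 1, _ =>
        intro hk
        rw [detB_one ν ω A hA hk, Wk_one ν ω hk]
        ring
      | (k + 2), ih =>
        intro hk
        rw [detB_step ν ω A hA k hk]
        rw [ih (k + 1) (by omega) (by omega), ih k (by omega) (by omega)]
        rw [Wk_succ_succ ν ω k hk]
        push_cast
        linear_combination (-(Complex.I ^ k
          * Complex.exp (((ω s(⟨k, by omega⟩, ⟨k + 1, by omega⟩) : ℝ)) : ℂ)
          * ((Wk ν ω k : ℝ) : ℂ))) * Complex.I_sq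
  have hAA : A.submatrix (Fin.castLE (le_refl n)) (Fin.castLE (le_refl n)) = A := by
    ext i j
    rfl
  have hdet := key n (le_refl n)
  rw [hAA] at hdet
  rw [hdet, norm_mul, norm_pow, Complex.norm_I, one_pow, one_mul, Complex.norm_real, Real.norm_eq_abs,
    abs_of_nonneg (by rw [Wk, Zfun]; exact Finset.sum_nonneg fun _ _ => (Real.exp_pos _).le)]
  rw [Wk]
  congr 1
  ext v
  simp [v.isLt]
end
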